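/- Let h_0 > 0, δ > 0, μ > 0, D_h > 0, ψ(y) = cos(π y/(2h_0)), σ(t) = h_0(1 + δ − (δ/2) e^{−δ t}), and for ε > 0 let H̄(x,t) = ε e^{−δ t} ψ(x h_0/σ(t)). Then there exists ε_0 > 0 (for instance ε_0 = h_0² δ²/(μ D_h π)) such that for every ε with 0 < ε ≤ ε_0 and every t ≥ 0 one has σ'(t) ≥ −μ D_h ∂_x H̄(σ(t), t) and −σ'(t) ≤ −μ D_h ∂_x H̄(−σ(t), t); that is, the explicit upper solution satisfies the free-boundary (Stefan-type) inequalities at x = ±σ(t). -/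

import Mathlib

lemma hb_deriv (h0 δ ε s t : ℝ) (hs : s ≠ 0) (x0 : ℝ) :
    HasDerivAt (fun x => ε * Real.exp (-δ * t) *
      Real.cos (Real.pi * (x * h0 / s) / (2 * h0)))
      (ε * Real.exp (-δ * t) *
        (-Real.sin (Real.pi * (x0 * h0 / s) / (2 * h0)) * (Real.pi * (h0 / s) / (2 * h0)))) x0 := by
  have h1 : HasDerivAt (fun x : ℝ => Real.pi * (x * h0 / s) / (2 * h0))
      (Real.pi * (h0 / s) / (2 * h0)) x0 := by
    have := (((hasDerivAt_id x0).mul_const h0).div_const s).const_mul Real.pi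
    simpa using this.div_const (2 * h0)
  have h2 := h1.cos
  exact h2.const_mul _

/-- For small enough `ε`, the explicit upper solution satisfies
the free-boundary (Stefan-type) inequalities at `x = ±σ(t)`. -/
theorem upper_solution_free_boundary_inequalities
    (h0 δ μ Dh : ℝ) (hh0 : 0 < h0) (hδ : 0 < δ) (hμ : 0 < μ) (hDh : 0 < Dh)
    (ψ : ℝ → ℝ) (hψ : ψ = fun y => Real.cos (Real.pi * y / (2 * h0)))
    (σ : ℝ → ℝ) (hσ : σ = fun t => h0 * (1 + δ - δ / 2 * Real.exp (-δ * t)))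
    (Hb : ℝ → ℝ → ℝ → ℝ)
    (hHb : Hb = fun ε x t => ε * Real.exp (-δ * t) * ψ (x * h0 / σ t)) :
    ∃ ε0 : ℝ, 0 < ε0 ∧
      ∀ ε : ℝ, 0 < ε → ε ≤ ε0 → ∀ t : ℝ, 0 ≤ t →
        deriv σ t ≥ -(μ * Dh) * deriv (fun x => Hb ε x t) (σ t) ∧
        -(deriv σ t) ≤ -(μ * Dh) * deriv (fun x => Hb ε x t) (-(σ t)) := by
  refine ⟨h0 ^ 2 * δ ^ 2 / (μ * Dh * Real.pi), by positivity, ?_⟩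
  intro ε hε hεle t ht
  set E := Real.exp (-δ * t) with hE
  have hEpos : 0 < E := Real.exp_pos _
  have hE1 : E ≤ 1 := by
    rw [hE]
    apply Real.exp_le_one_iff.mpr
    nlinarith
  set s := σ t with hs
  have hsval : s = h0 * (1 + δ - δ / 2 * E) := by rw [hs, hσ]
  have hsge : h0 ≤ s := by
    rw [hsval]
    nlinarith [mul_pos hh0 hδ, mul_le_mul_of_nonneg_left hE1 (mul_pos hh0 hδ).le]
  have hspos : 0 < s := lt_of_lt_of_le hh0 hsge
  have hsne : s ≠ 0 := ne_of_gt hspos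
  -- derivative of σ
  have hσderiv : deriv σ t = h0 * (δ ^ 2 / 2) * E := by
    have h1 : HasDerivAt (fun u : ℝ => -δ * u) (-δ) t := by
      simpa using (hasDerivAt_id t).const_mul (-δ)
    have h2 : HasDerivAt (fun u => Real.exp (-δ * u)) (Real.exp (-δ * t) * (-δ)) t := h1.exp
    have h3 : HasDerivAt σ (h0 * (δ ^ 2 / 2) * E) t := by
      rw [hσ]
      have := ((h2.const_mul (δ / 2)).const_sub (1 + δ)).const_mul h0
      refine this.congr_deriv ?_
      rw [hE]; ring
    exact h3.deriv
  rw [hσderiv]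
  -- derivative of Hb in x
  have hHbc : (fun x => Hb ε x t) = fun x =>
      ε * E * Real.cos (Real.pi * (x * h0 / s) / (2 * h0)) := by
    rw [hHb, hψ]
  have hderivAt : ∀ x0 : ℝ, deriv (fun x => Hb ε x t) x0 =
      ε * E * (-Real.sin (Real.pi * (x0 * h0 / s) / (2 * h0)) * (Real.pi * (h0 / s) / (2 * h0))) := by
    intro x0
    rw [hHbc]
    exact (hb_deriv h0 δ ε s t hsne x0).deriv
  have harg1 : Real.pi * (s * h0 / s) / (2 * h0) = Real.pi / 2 := by
    field_simp
  have harg2 : Real.pi * (-s * h0 / s) / (2 * h0) = -(Real.pi / 2) := by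
    field_simp
  have hd1 : deriv (fun x => Hb ε x t) s = ε * E * (-(Real.pi * (h0 / s) / (2 * h0))) := by
    rw [hderivAt s, harg1, Real.sin_pi_div_two]; ring
  have hd2 : deriv (fun x => Hb ε x t) (-s) = ε * E * (Real.pi * (h0 / s) / (2 * h0)) := by
    rw [hderivAt (-s), harg2, Real.sin_neg, Real.sin_pi_div_two]; ring
  rw [hd1, hd2]
  -- final inequality: h0 * δ²/2 * E ≥ μ Dh ε E π/(2s)
  have hπ := Real.pi_pos
  have key : μ * Dh * ε * Real.pi / (2 * s) ≤ h0 * (δ ^ 2 / 2) := by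
    rw [div_le_iff₀ (by positivity)]
    have hεle' : μ * Dh * Real.pi * ε ≤ h0 ^ 2 * δ ^ 2 := by
      have := (le_div_iff₀ (by positivity : (0:ℝ) < μ * Dh * Real.pi)).mp hεle
      linarith
    nlinarith [mul_le_mul_of_nonneg_left hsge (by positivity : (0:ℝ) ≤ h0 * δ ^ 2)]
  constructor
  · have : -(μ * Dh) * (ε * E * (-(Real.pi * (h0 / s) / (2 * h0)))) =
        (μ * Dh * ε * Real.pi / (2 * s)) * E := by
      field_simp
    rw [this, ge_iff_le]
    exact mul_le_mul_of_nonneg_right key hEpos.le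
  · have : -(μ * Dh) * (ε * E * (Real.pi * (h0 / s) / (2 * h0))) =
        -((μ * Dh * ε * Real.pi / (2 * s)) * E) := by
      field_simp
    rw [this, neg_le_neg_iff]
    exact mul_le_mul_of_nonneg_right key hEpos.le
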